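/- arXiv:math/0510473 — 5 statements merged into one kernel-verified Lean document; each statement's English description precedes it below -/
import Mathlib

section
/- Assume the deterministic Skorokhod setup: f : ℝ → ℝ is 1-Lipschitz, D = {(x₁,x₂) ∈ ℝ² : x₂ > f(x₁)}, K = {(x₁,x₂) ∈ ℝ² : x₂ > |x₁|} with closure K̄ = {x₂ ≥ |x₁|}; X, Y : [0,∞) → ℝ² are continuous, take values in the closure D̄ = {x₂ ≥ f(x₁)}, and satisfy X₀ = Y₀; moreover X_t = X₀ + w_t + A_t and Y_t = Y₀ + w_t + B_t for all t ≥ 0, where w, A, B : [0,∞) → ℝ² are continuous with w₀ = A₀ = B₀ = 0, A_t − A_s ∈ K̄ and B_t − B_s ∈ K̄ whenever 0 ≤ s ≤ t, A is constant on every interval on which X remains in D (if X_u ∈ D for all u ∈ (s,t) then A_s = A_t), and B is constant on every interval on which Y remains in D. Then for every t ≥ 0, X_t − Y_t ∉ K and Y_t − X_t ∉ K. -/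
/-- Key lemma: under the (one-sided) Skorokhod setup, the difference `X - Y`
never enters the open cone `{p : |p.1| < p.2}`. -/
lemma skorokhod_key (f : ℝ → ℝ) (hf : LipschitzWith 1 f)
    (X Y A B : ℝ → ℝ × ℝ)
    (hXc : ContinuousOn X (Set.Ici 0)) (hYc : ContinuousOn Y (Set.Ici 0))
    (hYD : ∀ t, 0 ≤ t → f (Y t).1 ≤ (Y t).2)
    (hdiff : ∀ t, 0 ≤ t → X t - Y t = A t - B t)
    (hd0 : X 0 - Y 0 = 0)
    (hBincr : ∀ s t, 0 ≤ s → s ≤ t → |(B t - B s).1| ≤ (B t - B s).2)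
    (hAconst : ∀ s t, 0 ≤ s → s ≤ t →
      (∀ u, u ∈ Set.Ioo s t → f (X u).1 < (X u).2) → A t = A s)
    (t : ℝ) (ht : 0 ≤ t) : ¬ |(X t - Y t).1| < (X t - Y t).2 := by
  intro hK
  set g : ℝ → ℝ × ℝ := fun s => X s - Y s with hg
  have hgc : ContinuousOn g (Set.Icc 0 t) :=
    (hXc.mono Set.Icc_subset_Ici_self).sub (hYc.mono Set.Icc_subset_Ici_self)
  set S : Set ℝ := Set.Icc 0 t ∩ g ⁻¹' {p : ℝ × ℝ | p.2 ≤ |p.1|} with hS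
  have hSclosed : IsClosed S :=
    hgc.preimage_isClosed_of_isClosed isClosed_Icc
      (isClosed_le continuous_snd continuous_fst.abs)
  have h0S : (0:ℝ) ∈ S := by
    refine ⟨⟨le_refl 0, ht⟩, ?_⟩
    show (g 0).2 ≤ |(g 0).1|
    have : g 0 = 0 := hd0
    rw [this]; simp
  have hScmp : IsCompact S :=
    IsCompact.of_isClosed_subset isCompact_Icc hSclosed Set.inter_subset_left
  set σ := sSup S with hσdef
  have hσS : σ ∈ S := hScmp.sSup_mem ⟨0, h0S⟩
  obtain ⟨⟨hσ0, hσt⟩, hσK⟩ := hσS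
  have hσK' : (g σ).2 ≤ |(g σ).1| := hσK
  have hσlt : σ < t := by
    rcases lt_or_eq_of_le hσt with h | h
    · exact h
    · exfalso; rw [h] at hσK'; exact absurd hK (not_lt.2 hσK')
  have hmem : ∀ u, u ∈ Set.Ioo σ t → |(g u).1| < (g u).2 := by
    intro u hu
    by_contra h
    have huS : u ∈ S := ⟨⟨hσ0.trans hu.1.le, hu.2.le⟩, not_lt.1 h⟩
    have : u ≤ σ := le_csSup hScmp.bddAbove huS
    exact absurd hu.1 (not_lt.2 this)
  have hXin : ∀ u, u ∈ Set.Ioo σ t → f (X u).1 < (X u).2 := by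
    intro u hu
    have hu0 : 0 ≤ u := hσ0.trans hu.1.le
    have h1 := hmem u hu
    have h2 : |f (X u).1 - f (Y u).1| ≤ |(X u).1 - (Y u).1| := by
      have := hf.dist_le_mul (X u).1 (Y u).1
      simpa [Real.dist_eq] using this
    have h3 := hYD u hu0
    have e1 : (g u).1 = (X u).1 - (Y u).1 := rfl
    have e2 : (g u).2 = (X u).2 - (Y u).2 := rfl
    rw [e1, e2] at h1
    have h4 := (abs_le.1 h2).2
    have h5 := le_abs_self ((X u).1 - (Y u).1)
    linarith
  have hA : A t = A σ := hAconst σ t hσ0 hσlt.le hXin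
  have hb := hBincr σ t hσ0 hσlt.le
  have hgt : g t = g σ - (B t - B σ) := by
    have e1 : g t = A t - B t := hdiff t ht
    have e2 : g σ = A σ - B σ := hdiff σ hσ0
    rw [e1, e2, hA]; abel
  have h1 : (g t).1 = (g σ).1 - (B t - B σ).1 := by rw [hgt]; rfl
  have h2 : (g t).2 = (g σ).2 - (B t - B σ).2 := by rw [hgt]; rfl
  have hK' : |(g t).1| < (g t).2 := hK
  rw [h1, h2] at hK'
  have habs : |(g σ).1| - |(B t - B σ).1| ≤ |(g σ).1 - (B t - B σ).1| :=
    abs_sub_abs_le_abs_sub _ _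
  linarith

/-- Deterministic Skorokhod setup: the difference of two solutions never enters
the open cone K = {(x₁,x₂) : x₂ > |x₁|} in either direction. -/
theorem diff_not_mem_cone
    (f : ℝ → ℝ) (hf : LipschitzWith 1 f)
    (X Y w A B : ℝ → ℝ × ℝ)
    (hXc : ContinuousOn X (Set.Ici 0)) (hYc : ContinuousOn Y (Set.Ici 0))
    (hwc : ContinuousOn w (Set.Ici 0))
    (hAc : ContinuousOn A (Set.Ici 0)) (hBc : ContinuousOn B (Set.Ici 0))
    (hXD : ∀ t, 0 ≤ t → f (X t).1 ≤ (X t).2)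
    (hYD : ∀ t, 0 ≤ t → f (Y t).1 ≤ (Y t).2)
    (h0 : X 0 = Y 0)
    (hXeq : ∀ t, 0 ≤ t → X t = X 0 + w t + A t)
    (hYeq : ∀ t, 0 ≤ t → Y t = Y 0 + w t + B t)
    (hw0 : w 0 = 0) (hA0 : A 0 = 0) (hB0 : B 0 = 0)
    (hAincr : ∀ s t, 0 ≤ s → s ≤ t → |(A t - A s).1| ≤ (A t - A s).2)
    (hBincr : ∀ s t, 0 ≤ s → s ≤ t → |(B t - B s).1| ≤ (B t - B s).2)
    (hAconst : ∀ s t, 0 ≤ s → s ≤ t →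
      (∀ u, u ∈ Set.Ioo s t → f (X u).1 < (X u).2) → A t = A s)
    (hBconst : ∀ s t, 0 ≤ s → s ≤ t →
      (∀ u, u ∈ Set.Ioo s t → f (Y u).1 < (Y u).2) → B t = B s) :
    ∀ t, 0 ≤ t →
      X t - Y t ∉ {p : ℝ × ℝ | |p.1| < p.2} ∧
      Y t - X t ∉ {p : ℝ × ℝ | |p.1| < p.2} := by
  intro t ht
  have hdiff : ∀ s, 0 ≤ s → X s - Y s = A s - B s := by
    intro s hs
    rw [hXeq s hs, hYeq s hs, h0]; abel
  have hdiff' : ∀ s, 0 ≤ s → Y s - X s = B s - A s := by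
    intro s hs
    rw [hXeq s hs, hYeq s hs, h0]; abel
  have hd0 : X 0 - Y 0 = 0 := by rw [h0]; abel
  have hd0' : Y 0 - X 0 = 0 := by rw [h0]; abel
  constructor
  · exact skorokhod_key f hf X Y A B hXc hYc hYD hdiff hd0 hBincr hAconst t ht
  · exact skorokhod_key f hf Y X B A hYc hXc hXD hdiff' hd0' hAincr hBconst t ht
end

section
/- Assume the deterministic Skorokhod setup: f : ℝ → ℝ is 1-Lipschitz, D = {(x₁,x₂) ∈ ℝ² : x₂ > f(x₁)}, K = {(x₁,x₂) ∈ ℝ² : x₂ > |x₁|} with closure K̄ = {x₂ ≥ |x₁|}; X, Y : [0,∞) → ℝ² are continuous, take values in the closure D̄ = {x₂ ≥ f(x₁)}, and satisfy X₀ = Y₀; moreover X_t = X₀ + w_t + A_t and Y_t = Y₀ + w_t + B_t for all t ≥ 0, where w, A, B : [0,∞) → ℝ² are continuous with w₀ = A₀ = B₀ = 0, A_t − A_s ∈ K̄ and B_t − B_s ∈ K̄ whenever 0 ≤ s ≤ t, A is constant on every interval on which X remains in D, and B is constant on every interval on which Y remains in D. Write X_t = (X¹_t, X²_t) and Y_t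 = (Y¹_t, Y²_t). Then for every t ≥ 0, if X¹_t = Y¹_t then X_t = Y_t. -/
open Set

private lemma skor_aux (f : ℝ → ℝ) (hf : LipschitzWith 1 f)
    (X Y A B : ℝ → ℝ × ℝ)
    (hXc : ContinuousOn X (Set.Ici 0)) (hYc : ContinuousOn Y (Set.Ici 0))
    (hYD : ∀ t, 0 ≤ t → f (Y t).1 ≤ (Y t).2)
    (hD : ∀ u, 0 ≤ u → X u - Y u = A u - B u)
    (hBincr : ∀ s t, 0 ≤ s → s ≤ t → |(B t - B s).1| ≤ (B t - B s).2)
    (hAconst : ∀ s t, 0 ≤ s → s ≤ t →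
      (∀ u, u ∈ Set.Ioo s t → f (X u).1 < (X u).2) → A t = A s)
    (hD0 : X 0 - Y 0 = 0) :
    ∀ t, 0 ≤ t → (X t).2 - (Y t).2 ≤ |(X t).1 - (Y t).1| := by
  have hlip : ∀ a b : ℝ, |f a - f b| ≤ |a - b| := by
    intro a b
    have := hf.dist_le_mul a b
    simpa [Real.dist_eq] using this
  intro t ht
  by_contra hcon
  push_neg at hcon
  set φ : ℝ → ℝ := fun u => |(X u).1 - (Y u).1| - ((X u).2 - (Y u).2) with hφ
  set S : Set ℝ := Icc 0 t ∩ φ ⁻¹' (Ici 0) with hS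
  have hXc' : ContinuousOn X (Icc 0 t) := hXc.mono (fun u hu => hu.1)
  have hYc' : ContinuousOn Y (Icc 0 t) := hYc.mono (fun u hu => hu.1)
  have hφc : ContinuousOn φ (Icc 0 t) := by
    apply ContinuousOn.sub
    · exact (((continuous_fst.comp_continuousOn hXc').sub
        (continuous_fst.comp_continuousOn hYc')).abs)
    · exact ((continuous_snd.comp_continuousOn hXc').sub
        (continuous_snd.comp_continuousOn hYc'))
  have hSclosed : IsClosed S := hφc.preimage_isClosed_of_isClosed isClosed_Icc isClosed_Ici
  have h0S : (0:ℝ) ∈ S := by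
    refine ⟨⟨le_refl 0, ht⟩, ?_⟩
    have h1 : (X 0).1 - (Y 0).1 = 0 := by
      have := congrArg Prod.fst hD0; simpa using this
    have h2 : (X 0).2 - (Y 0).2 = 0 := by
      have := congrArg Prod.snd hD0; simpa using this
    simp [mem_preimage, hφ, h1, h2]
  have hbdd : BddAbove S := ⟨t, fun u hu => hu.1.2⟩
  set s := sSup S with hsdef
  have hsmem : s ∈ S := hSclosed.csSup_mem ⟨0, h0S⟩ hbdd
  have hs0 : 0 ≤ s := hsmem.1.1
  have hst : s ≤ t := hsmem.1.2
  have htS : t ∉ S := by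
    intro htS
    have h := htS.2
    simp only [hφ, mem_preimage, mem_Ici] at h
    linarith
  have hslt : s < t := lt_of_le_of_ne hst (fun h => htS (h ▸ hsmem))
  have hIoo : ∀ u, u ∈ Ioo s t → |(X u).1 - (Y u).1| < (X u).2 - (Y u).2 := by
    intro u hu
    have huS : u ∉ S := fun huS => absurd (le_csSup hbdd huS) (not_le.mpr hu.1)
    have hIcc : u ∈ Icc 0 t := ⟨hs0.trans hu.1.le, hu.2.le⟩
    have : ¬ (0:ℝ) ≤ φ u := fun h => huS ⟨hIcc, h⟩
    have := not_le.mp this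
    simpa [hφ, sub_neg] using this
  have hXin : ∀ u, u ∈ Ioo s t → f (X u).1 < (X u).2 := by
    intro u hu
    have hu0 : (0:ℝ) ≤ u := hs0.trans hu.1.le
    have h1 : f (X u).1 - f (Y u).1 ≤ |(X u).1 - (Y u).1| :=
      (le_abs_self _).trans (hlip _ _)
    have h2 := hYD u hu0
    have h3 := hIoo u hu
    linarith
  have hA : A t = A s := hAconst s t hs0 hst hXin
  have key : X t - Y t = (X s - Y s) - (B t - B s) := by
    rw [hD t ht, hD s hs0, hA]; abel
  have k1 : (X t).1 - (Y t).1 = ((X s).1 - (Y s).1) - ((B t - B s).1) := by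
    have := congrArg Prod.fst key; simpa using this
  have k2 : (X t).2 - (Y t).2 = ((X s).2 - (Y s).2) - ((B t - B s).2) := by
    have := congrArg Prod.snd key; simpa using this
  have hB := hBincr s t hs0 hst
  have hsle : (X s).2 - (Y s).2 ≤ |(X s).1 - (Y s).1| := by
    have : (0:ℝ) ≤ φ s := hsmem.2
    simpa [hφ, sub_nonneg] using this
  have habs : |(X s).1 - (Y s).1| - |(B t - B s).1| ≤ |(X t).1 - (Y t).1| := by
    rw [k1]; exact abs_sub_abs_le_abs_sub _ _
  linarith

/-- Deterministic Skorokhod setup: if the first coordinates of two solutions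
agree at time t, then the solutions agree at time t. -/
theorem eq_of_fst_eq
    (f : ℝ → ℝ) (hf : LipschitzWith 1 f)
    (X Y w A B : ℝ → ℝ × ℝ)
    (hXc : ContinuousOn X (Set.Ici 0)) (hYc : ContinuousOn Y (Set.Ici 0))
    (hwc : ContinuousOn w (Set.Ici 0))
    (hAc : ContinuousOn A (Set.Ici 0)) (hBc : ContinuousOn B (Set.Ici 0))
    (hXD : ∀ t, 0 ≤ t → f (X t).1 ≤ (X t).2)
    (hYD : ∀ t, 0 ≤ t → f (Y t).1 ≤ (Y t).2)
    (h0 : X 0 = Y 0)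
    (hXeq : ∀ t, 0 ≤ t → X t = X 0 + w t + A t)
    (hYeq : ∀ t, 0 ≤ t → Y t = Y 0 + w t + B t)
    (hw0 : w 0 = 0) (hA0 : A 0 = 0) (hB0 : B 0 = 0)
    (hAincr : ∀ s t, 0 ≤ s → s ≤ t → |(A t - A s).1| ≤ (A t - A s).2)
    (hBincr : ∀ s t, 0 ≤ s → s ≤ t → |(B t - B s).1| ≤ (B t - B s).2)
    (hAconst : ∀ s t, 0 ≤ s → s ≤ t →
      (∀ u, u ∈ Set.Ioo s t → f (X u).1 < (X u).2) → A t = A s)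
    (hBconst : ∀ s t, 0 ≤ s → s ≤ t →
      (∀ u, u ∈ Set.Ioo s t → f (Y u).1 < (Y u).2) → B t = B s) :
    ∀ t, 0 ≤ t → (X t).1 = (Y t).1 → X t = Y t := by
  have hD : ∀ u, 0 ≤ u → X u - Y u = A u - B u := by
    intro u hu
    rw [hXeq u hu, hYeq u hu, h0]; abel
  have hD' : ∀ u, 0 ≤ u → Y u - X u = B u - A u := by
    intro u hu
    have := hD u hu
    have : -(X u - Y u) = -(A u - B u) := by rw [this]
    simpa [neg_sub] using this
  have hD0 : X 0 - Y 0 = 0 := by rw [h0]; abel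
  have hD0' : Y 0 - X 0 = 0 := by rw [h0]; abel
  have aux1 := skor_aux f hf X Y A B hXc hYc hYD hD hBincr hAconst hD0
  have aux2 := skor_aux f hf Y X B A hYc hXc hXD hD' hAincr hBconst hD0'
  intro t ht hfst
  have h1 := aux1 t ht
  have h2 := aux2 t ht
  rw [hfst] at h1
  have h1' : (X t).2 - (Y t).2 ≤ 0 := by simpa using h1
  have h2' : (Y t).2 - (X t).2 ≤ 0 := by
    have : (Y t).1 - (X t).1 = 0 := by rw [hfst]; ring
    rw [this] at h2; simpa using h2
  exact Prod.ext hfst (by linarith)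
end

section
/- Assume the deterministic Skorokhod setup: f : ℝ → ℝ is 1-Lipschitz, D = {(x₁,x₂) ∈ ℝ² : x₂ > f(x₁)}, K = {(x₁,x₂) ∈ ℝ² : x₂ > |x₁|} with closure K̄ = {x₂ ≥ |x₁|}; X, Y : [0,∞) → ℝ² are continuous, take values in the closure D̄ = {x₂ ≥ f(x₁)}, and satisfy X₀ = Y₀; moreover X_t = X₀ + w_t + A_t and Y_t = Y₀ + w_t + B_t for all t ≥ 0, where w, A, B : [0,∞) → ℝ² are continuous with w₀ = A₀ = B₀ = 0, A_t − A_s ∈ K̄ and B_t − B_s ∈ K̄ whenever 0 ≤ s ≤ t, A is constant on every interval on which X remains in D, and B is constant on every interval on which Y remains in D. Write X_t = (X¹_t, X²_t) and Y_t = (Y¹_t, Y²_t). Then for every t ≥ 0, |X²_t − Y²_t| ≤ |X¹_t − Y¹_t|. -/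
lemma skorokhod_aux
    (f : ℝ → ℝ) (hf : LipschitzWith 1 f)
    (X Y A B : ℝ → ℝ × ℝ)
    (hXc : ContinuousOn X (Set.Ici 0)) (hYc : ContinuousOn Y (Set.Ici 0))
    (hYD : ∀ t, 0 ≤ t → f (Y t).1 ≤ (Y t).2)
    (h0 : X 0 = Y 0)
    (hXY : ∀ t, 0 ≤ t → X t - Y t = A t - B t)
    (hBincr : ∀ s t, 0 ≤ s → s ≤ t → |(B t - B s).1| ≤ (B t - B s).2)
    (hAconst : ∀ s t, 0 ≤ s → s ≤ t →
      (∀ u, u ∈ Set.Ioo s t → f (X u).1 < (X u).2) → A t = A s) :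
    ∀ t, 0 ≤ t → (X t).2 - (Y t).2 ≤ |(X t).1 - (Y t).1| := by
  intro t ht
  by_contra hcon
  push_neg at hcon
  set g : ℝ → ℝ := fun r => (X r).2 - (Y r).2 - |(X r).1 - (Y r).1| with hg
  have hgt : 0 < g t := by simp [hg]; linarith
  have hIcc : Set.Icc (0:ℝ) t ⊆ Set.Ici 0 := Set.Icc_subset_Ici_self
  have hgc : ContinuousOn g (Set.Icc 0 t) := by
    apply ContinuousOn.sub
    · exact ((hXc.mono hIcc).snd).sub ((hYc.mono hIcc).snd)
    · exact (((hXc.mono hIcc).fst).sub ((hYc.mono hIcc).fst)).abs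
  set S : Set ℝ := Set.Icc 0 t ∩ g ⁻¹' Set.Iic 0 with hS
  have hSclosed : IsClosed S := hgc.preimage_isClosed_of_isClosed isClosed_Icc isClosed_Iic
  have h0S : (0:ℝ) ∈ S := by
    constructor
    · exact ⟨le_refl 0, ht⟩
    · simp [hg, h0]
  have hSbdd : BddAbove S := ⟨t, fun r hr => hr.1.2⟩
  set s := sSup S with hs
  have hsS : s ∈ S := hSclosed.csSup_mem ⟨0, h0S⟩ hSbdd
  have hs0 : 0 ≤ s := hsS.1.1
  have hst : s ≤ t := hsS.1.2
  have hsne : s ≠ t := by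
    intro h
    have := hsS.2
    rw [h] at this
    simp only [Set.mem_preimage, Set.mem_Iic] at this
    linarith
  have hslt : s < t := lt_of_le_of_ne hst hsne
  -- on (s,t), g > 0
  have hgpos : ∀ u, u ∈ Set.Ioo s t → 0 < g u := by
    intro u hu
    by_contra h
    push_neg at h
    have : u ∈ S := ⟨⟨le_trans hs0 hu.1.le, hu.2.le⟩, h⟩
    have := le_csSup hSbdd this
    linarith [hu.1]
  -- X is strictly inside D on (s,t)
  have hXin : ∀ u, u ∈ Set.Ioo s t → f (X u).1 < (X u).2 := by
    intro u hu
    have hu0 : (0:ℝ) ≤ u := le_trans hs0 hu.1.le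
    have hlip : f (X u).1 - f (Y u).1 ≤ |(X u).1 - (Y u).1| := by
      calc f (X u).1 - f (Y u).1 ≤ |f (X u).1 - f (Y u).1| := le_abs_self _
        _ ≤ |(X u).1 - (Y u).1| := by
          have := hf.dist_le_mul (X u).1 (Y u).1
          simpa [Real.dist_eq] using this
    have := hgpos u hu
    have hY := hYD u hu0
    simp only [hg] at this
    linarith
  have hAts : A t = A s := hAconst s t hs0 hst hXin
  have hXYt := hXY t ht
  have hXYs := hXY s hs0
  have hB := hBincr s t hs0 hst
  have e1t : (X t).1 - (Y t).1 = (A t).1 - (B t).1 := congrArg Prod.fst hXYt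
  have e2t : (X t).2 - (Y t).2 = (A t).2 - (B t).2 := congrArg Prod.snd hXYt
  have e1s : (X s).1 - (Y s).1 = (A s).1 - (B s).1 := congrArg Prod.fst hXYs
  have e2s : (X s).2 - (Y s).2 = (A s).2 - (B s).2 := congrArg Prod.snd hXYs
  have hB1 : ((B t - B s).1 : ℝ) = (B t).1 - (B s).1 := rfl
  have hB2 : ((B t - B s).2 : ℝ) = (B t).2 - (B s).2 := rfl
  rw [hB1, hB2] at hB
  have hgs : g s ≤ 0 := hsS.2
  simp only [hg] at hgs
  -- key chain
  have key : (X t).2 - (Y t).2 ≤ |(X t).1 - (Y t).1| := by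
    have hb : (X t).1 - (Y t).1 = ((X s).1 - (Y s).1) - ((B t).1 - (B s).1) := by
      rw [e1t, e1s, hAts]; ring
    have ha : (X t).2 - (Y t).2 = ((X s).2 - (Y s).2) - ((B t).2 - (B s).2) := by
      rw [e2t, e2s, hAts]; ring
    rw [hb, ha]
    have h1 : |(X s).1 - (Y s).1| - |(B t).1 - (B s).1| ≤
        |((X s).1 - (Y s).1) - ((B t).1 - (B s).1)| := abs_sub_abs_le_abs_sub _ _
    linarith
  linarith

/-- Deterministic Skorokhod setup: the second coordinates of two solutions
differ by no more than the first coordinates do. -/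
theorem abs_snd_diff_le_abs_fst_diff
    (f : ℝ → ℝ) (hf : LipschitzWith 1 f)
    (X Y w A B : ℝ → ℝ × ℝ)
    (hXc : ContinuousOn X (Set.Ici 0)) (hYc : ContinuousOn Y (Set.Ici 0))
    (hwc : ContinuousOn w (Set.Ici 0))
    (hAc : ContinuousOn A (Set.Ici 0)) (hBc : ContinuousOn B (Set.Ici 0))
    (hXD : ∀ t, 0 ≤ t → f (X t).1 ≤ (X t).2)
    (hYD : ∀ t, 0 ≤ t → f (Y t).1 ≤ (Y t).2)
    (h0 : X 0 = Y 0)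
    (hXeq : ∀ t, 0 ≤ t → X t = X 0 + w t + A t)
    (hYeq : ∀ t, 0 ≤ t → Y t = Y 0 + w t + B t)
    (hw0 : w 0 = 0) (hA0 : A 0 = 0) (hB0 : B 0 = 0)
    (hAincr : ∀ s t, 0 ≤ s → s ≤ t → |(A t - A s).1| ≤ (A t - A s).2)
    (hBincr : ∀ s t, 0 ≤ s → s ≤ t → |(B t - B s).1| ≤ (B t - B s).2)
    (hAconst : ∀ s t, 0 ≤ s → s ≤ t →
      (∀ u, u ∈ Set.Ioo s t → f (X u).1 < (X u).2) → A t = A s)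
    (hBconst : ∀ s t, 0 ≤ s → s ≤ t →
      (∀ u, u ∈ Set.Ioo s t → f (Y u).1 < (Y u).2) → B t = B s) :
    ∀ t, 0 ≤ t → |(X t).2 - (Y t).2| ≤ |(X t).1 - (Y t).1| := by
  have hXY : ∀ t, 0 ≤ t → X t - Y t = A t - B t := by
    intro t ht
    rw [hXeq t ht, hYeq t ht, h0]
    abel
  have hYX : ∀ t, 0 ≤ t → Y t - X t = B t - A t := by
    intro t ht
    have := hXY t ht
    have : -(X t - Y t) = -(A t - B t) := by rw [this]
    simpa [neg_sub] using this
  have key1 := skorokhod_aux f hf X Y A B hXc hYc hYD h0 hXY hBincr hAconst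
  have key2 := skorokhod_aux f hf Y X B A hYc hXc hXD h0.symm hYX hAincr hBconst
  intro t ht
  rw [abs_le]
  constructor
  · have := key2 t ht
    have h2 : |(Y t).1 - (X t).1| = |(X t).1 - (Y t).1| := abs_sub_comm _ _
    linarith [this, h2.le, h2.ge]
  · exact key1 t ht
end

section
/- Assume the deterministic Skorokhod setup: f : ℝ → ℝ is 1-Lipschitz, D = {(x₁,x₂) ∈ ℝ² : x₂ > f(x₁)}, K = {(x₁,x₂) ∈ ℝ² : x₂ > |x₁|} with closure K̄ = {x₂ ≥ |x₁|}; X, Y : [0,∞) → ℝ² are continuous, take values in the closure D̄ = {x₂ ≥ f(x₁)}, and satisfy X₀ = Y₀; moreover X_t = X₀ + w_t + A_t and Y_t = Y₀ + w_t + B_t for all t ≥ 0, where w, A, B : [0,∞) → ℝ² are continuous with w₀ = A₀ = B₀ = 0, A_t − A_s ∈ K̄ and B_t − B_s ∈ K̄ whenever 0 ≤ s ≤ t, A is constant on every interval on which X remains in D, and B is constant on every interval on which Y remains in D. Define V : [0,∞) → ℝ² by V_t = X_t if X¹_t < Y¹_t and V_t = Y_t otherwise. Then V is constant up to the driving path on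 intervals where it stays in D: if 0 ≤ s ≤ t and V_u ∈ D for all u ∈ (s,t), then V_t − w_t = V_s − w_s. -/
open Filter Topology

/-- One-sided comparison: the second-coordinate gap is dominated by the
first-coordinate gap. -/
private lemma skorokhod_one_sided (f : ℝ → ℝ) (hf : LipschitzWith 1 f)
    (X Y A B : ℝ → ℝ × ℝ)
    (hXc : ContinuousOn X (Set.Ici 0)) (hYc : ContinuousOn Y (Set.Ici 0))
    (hYD : ∀ t, 0 ≤ t → f (Y t).1 ≤ (Y t).2)
    (hdiff : ∀ t, 0 ≤ t → X t - Y t = A t - B t)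
    (hAconst : ∀ s t, 0 ≤ s → s ≤ t →
      (∀ u, u ∈ Set.Ioo s t → f (X u).1 < (X u).2) → A t = A s)
    (hBincr : ∀ s t, 0 ≤ s → s ≤ t → |(B t - B s).1| ≤ (B t - B s).2)
    (h0 : X 0 = Y 0) :
    ∀ t, 0 ≤ t → (X t).2 - (Y t).2 ≤ |(X t).1 - (Y t).1| := by
  have hlip : ∀ a b : ℝ, f a - f b ≤ |a - b| := by
    intro a b
    have := hf.dist_le_mul a b
    simp only [Real.dist_eq, NNReal.coe_one, one_mul] at this
    exact (le_abs_self _).trans this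
  by_contra h
  push_neg at h
  obtain ⟨t0, ht0, hψt0⟩ := h
  set ψ : ℝ → ℝ := fun u => (X u).2 - (Y u).2 - |(X u).1 - (Y u).1| with hψdef
  have hψt0' : 0 < ψ t0 := by simp only [hψdef]; linarith
  have hψc : ContinuousOn ψ (Set.Icc 0 t0) := by
    apply ContinuousOn.mono _ (Set.Icc_subset_Ici_self)
    exact (hXc.snd.sub hYc.snd).sub (hXc.fst.sub hYc.fst).abs
  set S := {u : ℝ | u ∈ Set.Icc 0 t0 ∧ ψ u ≤ 0} with hSdef
  have hSclosed : IsClosed S := by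
    have : S = Set.Icc 0 t0 ∩ ψ ⁻¹' Set.Iic 0 := rfl
    rw [this]
    exact hψc.preimage_isClosed_of_isClosed isClosed_Icc isClosed_Iic
  have h0S : (0:ℝ) ∈ S := by
    constructor
    · exact ⟨le_refl 0, ht0⟩
    · simp [hψdef, h0]
  have hbdd : BddAbove S := ⟨t0, fun x hx => hx.1.2⟩
  set τ := sSup S with hτdef
  have hτS : τ ∈ S := hSclosed.csSup_mem ⟨0, h0S⟩ hbdd
  have hτ0 : 0 ≤ τ := hτS.1.1
  have hτt0 : τ ≤ t0 := hτS.1.2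
  have hτlt : τ < t0 := by
    rcases lt_or_eq_of_le hτt0 with h | h
    · exact h
    · exfalso; rw [h] at hτS; linarith [hτS.2]
  have hpos : ∀ u, u ∈ Set.Ioc τ t0 → 0 < ψ u := by
    intro u hu
    by_contra hle
    push_neg at hle
    have huS : u ∈ S := ⟨⟨hτ0.trans hu.1.le, hu.2⟩, hle⟩
    exact absurd (le_csSup hbdd huS) (not_le.mpr hu.1)
  have hXD' : ∀ u, u ∈ Set.Ioo τ t0 → f (X u).1 < (X u).2 := by
    intro u hu
    have h1 := hpos u ⟨hu.1, hu.2.le⟩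
    have h2 := hYD u (hτ0.trans hu.1.le)
    have h3 := hlip (X u).1 (Y u).1
    simp only [hψdef] at h1
    linarith
  have hA : A t0 = A τ := hAconst τ t0 hτ0 hτlt.le hXD'
  have e : X t0 - Y t0 = (X τ - Y τ) - (B t0 - B τ) := by
    rw [hdiff t0 ht0, hdiff τ hτ0, ← hA]; abel
  have e1 : (X t0).1 - (Y t0).1 = ((X τ).1 - (Y τ).1) - ((B t0).1 - (B τ).1) := by
    have := congrArg Prod.fst e
    simpa using this
  have e2 : (X t0).2 - (Y t0).2 = ((X τ).2 - (Y τ).2) - ((B t0).2 - (B τ).2) := by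
    have := congrArg Prod.snd e
    simpa using this
  have hb := hBincr τ t0 hτ0 hτlt.le
  simp only [Prod.fst_sub, Prod.snd_sub] at hb
  have hψτ : ψ τ ≤ 0 := hτS.2
  simp only [hψdef] at hψτ hψt0'
  have habs1 : |(X τ).1 - (Y τ).1| - |(B t0).1 - (B τ).1| ≤
      |((X τ).1 - (Y τ).1) - ((B t0).1 - (B τ).1)| :=
    abs_sub_abs_le_abs_sub _ _
  rw [e1, e2] at hψt0'
  linarith [abs_nonneg ((B t0).1 - (B τ).1)]

/-- Continuity of the coupled process minus the driving path. -/
private lemma skorokhod_cwa_V (X Y w V : ℝ → ℝ × ℝ) (E : Set ℝ) (r : ℝ)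
    (hX : ContinuousWithinAt X E r) (hY : ContinuousWithinAt Y E r)
    (hw : ContinuousWithinAt w E r)
    (hV : ∀ t, V t = if (X t).1 < (Y t).1 then X t else Y t)
    (heq : (X r).1 = (Y r).1 → X r = Y r) :
    ContinuousWithinAt (fun u => V u - w u) E r := by
  have hVc : ContinuousWithinAt V E r := by
    rcases lt_trichotomy (X r).1 (Y r).1 with h | h | h
    · have hc : ContinuousWithinAt (fun v => (Y v).1 - (X v).1) E r := hY.fst.sub hX.fst
      have hmem : (fun v => (Y v).1 - (X v).1) ⁻¹' Set.Ioi 0 ∈ 𝓝[E] r :=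
        hc (isOpen_Ioi.mem_nhds (sub_pos.mpr h))
      have hev : V =ᶠ[𝓝[E] r] X := by
        filter_upwards [hmem] with v hv
        rw [hV v, if_pos (sub_pos.mp hv)]
      exact hX.congr_of_eventuallyEq hev (by rw [hV r, if_pos h])
    · have hXY : X r = Y r := heq h
      have hVr : V r = Y r := by rw [hV r, if_neg (not_lt.mpr h.ge)]
      have hVr' : V r = X r := by rw [hVr, hXY]
      have hXd : Tendsto (fun u => dist (X u) (X r)) (𝓝[E] r) (𝓝 0) := by
        have := hX.dist (continuousWithinAt_const (b := X r))
        simpa using this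
      have hYd : Tendsto (fun u => dist (Y u) (Y r)) (𝓝[E] r) (𝓝 0) := by
        have := hY.dist (continuousWithinAt_const (b := Y r))
        simpa using this
      have hbound : ∀ u, dist (V u) (V r) ≤ dist (X u) (X r) + dist (Y u) (Y r) := by
        intro u
        rw [hV u]
        split_ifs with hcase
        · rw [hVr']
          exact le_add_of_le_of_nonneg le_rfl dist_nonneg
        · rw [hVr]
          exact le_add_of_nonneg_of_le dist_nonneg le_rfl
      have : Tendsto (fun u => dist (V u) (V r)) (𝓝[E] r) (𝓝 0) :=
        squeeze_zero (fun u => dist_nonneg) hbound (by simpa using hXd.add hYd)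
      exact tendsto_iff_dist_tendsto_zero.mpr this
    · have hc : ContinuousWithinAt (fun v => (X v).1 - (Y v).1) E r := hX.fst.sub hY.fst
      have hmem : (fun v => (X v).1 - (Y v).1) ⁻¹' Set.Ioi 0 ∈ 𝓝[E] r :=
        hc (isOpen_Ioi.mem_nhds (sub_pos.mpr h))
      have hev : V =ᶠ[𝓝[E] r] Y := by
        filter_upwards [hmem] with v hv
        rw [hV v, if_neg (not_lt.mpr (sub_pos.mp hv).le)]
      exact hY.congr_of_eventuallyEq hev (by rw [hV r, if_neg (not_lt.mpr h.le)])
  exact hVc.sub hw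

/-- Deterministic Skorokhod setup: the coupled process V is constant up to the
driving path on intervals where it stays in D. -/
theorem coupled_process_const_on_interior
    (f : ℝ → ℝ) (hf : LipschitzWith 1 f)
    (X Y w A B : ℝ → ℝ × ℝ)
    (hXc : ContinuousOn X (Set.Ici 0)) (hYc : ContinuousOn Y (Set.Ici 0))
    (hwc : ContinuousOn w (Set.Ici 0))
    (hAc : ContinuousOn A (Set.Ici 0)) (hBc : ContinuousOn B (Set.Ici 0))
    (hXD : ∀ t, 0 ≤ t → f (X t).1 ≤ (X t).2)
    (hYD : ∀ t, 0 ≤ t → f (Y t).1 ≤ (Y t).2)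
    (h0 : X 0 = Y 0)
    (hXeq : ∀ t, 0 ≤ t → X t = X 0 + w t + A t)
    (hYeq : ∀ t, 0 ≤ t → Y t = Y 0 + w t + B t)
    (hw0 : w 0 = 0) (hA0 : A 0 = 0) (hB0 : B 0 = 0)
    (hAincr : ∀ s t, 0 ≤ s → s ≤ t → |(A t - A s).1| ≤ (A t - A s).2)
    (hBincr : ∀ s t, 0 ≤ s → s ≤ t → |(B t - B s).1| ≤ (B t - B s).2)
    (hAconst : ∀ s t, 0 ≤ s → s ≤ t →
      (∀ u, u ∈ Set.Ioo s t → f (X u).1 < (X u).2) → A t = A s)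
    (hBconst : ∀ s t, 0 ≤ s → s ≤ t →
      (∀ u, u ∈ Set.Ioo s t → f (Y u).1 < (Y u).2) → B t = B s)
    (V : ℝ → ℝ × ℝ)
    (hV : ∀ t, V t = if (X t).1 < (Y t).1 then X t else Y t) :
    ∀ s t, 0 ≤ s → s ≤ t →
      (∀ u, u ∈ Set.Ioo s t → f (V u).1 < (V u).2) →
      V t - w t = V s - w s := by
  have hdiff : ∀ t, 0 ≤ t → X t - Y t = A t - B t := by
    intro t ht
    rw [hXeq t ht, hYeq t ht, h0]; abel
  have hdiff' : ∀ t, 0 ≤ t → Y t - X t = B t - A t := by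
    intro t ht
    rw [hXeq t ht, hYeq t ht, h0]; abel
  have h1 : ∀ u, 0 ≤ u → (X u).1 = (Y u).1 → X u = Y u := by
    intro u hu hfst
    have hXY := skorokhod_one_sided f hf X Y A B hXc hYc hYD hdiff hAconst hBincr h0 u hu
    have hYX := skorokhod_one_sided f hf Y X B A hYc hXc hXD hdiff' hBconst hAincr h0.symm u hu
    rw [hfst, sub_self, abs_zero] at hXY
    rw [← hfst, sub_self, abs_zero] at hYX
    have : (X u).2 = (Y u).2 := le_antisymm (by linarith) (by linarith)
    exact Prod.ext hfst this
  have hABeq : ∀ u, 0 ≤ u → X u = Y u → A u = B u := by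
    intro u hu h
    have := hdiff u hu
    rw [h, sub_self] at this
    exact (sub_eq_zero.mp this.symm)
  have hGX : ∀ u, 0 ≤ u → (X u).1 < (Y u).1 → V u - w u = X 0 + A u := by
    intro u hu hlt
    rw [hV u, if_pos hlt, hXeq u hu]; abel
  have hGY : ∀ u, 0 ≤ u → ¬ (X u).1 < (Y u).1 → V u - w u = X 0 + B u := by
    intro u hu hlt
    rw [hV u, if_neg hlt, hYeq u hu, ← h0]; abel
  intro s t hs hst hVD
  rcases eq_or_lt_of_le hst with heqst | hlt
  · rw [← heqst]
  -- local constancy on (s,t)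
  have hloc : ∀ u0 ∈ Set.Ioo s t, ∃ a b : ℝ, u0 ∈ Set.Ioo a b ∧
      Set.Ioo a b ⊆ Set.Ioo s t ∧ ∀ v ∈ Set.Ioo a b, V v - w v = V u0 - w u0 := by
    intro u0 hu0
    have hu0' : 0 < u0 := lt_of_le_of_lt hs hu0.1
    have hIci : Set.Ici (0:ℝ) ∈ 𝓝 u0 := Ici_mem_nhds hu0'
    have hXa : ContinuousAt X u0 := hXc.continuousAt hIci
    have hYa : ContinuousAt Y u0 := hYc.continuousAt hIci
    have hnhds : Set.Ioo s t ∈ 𝓝 u0 := isOpen_Ioo.mem_nhds hu0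
    have hpos0 : ∀ v ∈ Set.Ioo s t, (0:ℝ) ≤ v := fun v hv => (hs.trans hv.1.le)
    rcases lt_trichotomy (X u0).1 (Y u0).1 with hcase | hcase | hcase
    · -- V = X near u0
      have hc : ContinuousAt (fun v => (Y v).1 - (X v).1) u0 := hYa.fst.sub hXa.fst
      have hmem : (fun v => (Y v).1 - (X v).1) ⁻¹' Set.Ioi 0 ∈ 𝓝 u0 :=
        hc (isOpen_Ioi.mem_nhds (sub_pos.mpr hcase))
      obtain ⟨a, b, hu0ab, hab⟩ := mem_nhds_iff_exists_Ioo_subset.mp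
        (Filter.inter_mem hmem hnhds)
      have habst : Set.Ioo a b ⊆ Set.Ioo s t := fun x hx => (hab hx).2
      have hXDab : ∀ x ∈ Set.Ioo a b, f (X x).1 < (X x).2 := by
        intro x hx
        have h1 := hVD x (hab hx).2
        rw [hV x, if_pos (sub_pos.mp (hab hx).1)] at h1
        exact h1
      have hAcst : ∀ v ∈ Set.Ioo a b, A v = A u0 := by
        intro v hv
        have hv0 : 0 ≤ v := hpos0 v (habst hv)
        rcases le_total v u0 with hle | hle
        · exact (hAconst v u0 hv0 hle (fun x hx =>
            hXDab x ⟨hv.1.trans hx.1, hx.2.trans hu0ab.2⟩)).symm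
        · exact hAconst u0 v (hu0'.le) hle (fun x hx =>
            hXDab x ⟨hu0ab.1.trans hx.1, hx.2.trans hv.2⟩)
      refine ⟨a, b, hu0ab, habst, fun v hv => ?_⟩
      rw [hGX v (hpos0 v (habst hv)) (sub_pos.mp (hab hv).1),
        hGX u0 hu0'.le hcase, hAcst v hv]
    · -- X u0 = Y u0
      have hXY : X u0 = Y u0 := h1 u0 hu0'.le hcase
      have hnotlt : ¬ (X u0).1 < (Y u0).1 := not_lt.mpr hcase.ge
      have hDY : f (Y u0).1 < (Y u0).2 := by
        have := hVD u0 hu0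
        rw [hV u0, if_neg hnotlt] at this
        exact this
      have hDX : f (X u0).1 < (X u0).2 := by rw [hXY]; exact hDY
      have hcX : ContinuousAt (fun v => (X v).2 - f (X v).1) u0 :=
        hXa.snd.sub (hf.continuous.continuousAt.comp hXa.fst)
      have hcY : ContinuousAt (fun v => (Y v).2 - f (Y v).1) u0 :=
        hYa.snd.sub (hf.continuous.continuousAt.comp hYa.fst)
      have hmemX : (fun v => (X v).2 - f (X v).1) ⁻¹' Set.Ioi 0 ∈ 𝓝 u0 :=
        hcX (isOpen_Ioi.mem_nhds (sub_pos.mpr hDX))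
      have hmemY : (fun v => (Y v).2 - f (Y v).1) ⁻¹' Set.Ioi 0 ∈ 𝓝 u0 :=
        hcY (isOpen_Ioi.mem_nhds (sub_pos.mpr hDY))
      obtain ⟨a, b, hu0ab, hab⟩ := mem_nhds_iff_exists_Ioo_subset.mp
        (Filter.inter_mem (Filter.inter_mem hmemX hmemY) hnhds)
      have habst : Set.Ioo a b ⊆ Set.Ioo s t := fun x hx => (hab hx).2
      have hXDab : ∀ x ∈ Set.Ioo a b, f (X x).1 < (X x).2 :=
        fun x hx => sub_pos.mp (hab hx).1.1
      have hYDab : ∀ x ∈ Set.Ioo a b, f (Y x).1 < (Y x).2 :=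
        fun x hx => sub_pos.mp (hab hx).1.2
      have hAcst : ∀ v ∈ Set.Ioo a b, A v = A u0 := by
        intro v hv
        have hv0 : 0 ≤ v := hpos0 v (habst hv)
        rcases le_total v u0 with hle | hle
        · exact (hAconst v u0 hv0 hle (fun x hx =>
            hXDab x ⟨hv.1.trans hx.1, hx.2.trans hu0ab.2⟩)).symm
        · exact hAconst u0 v hu0'.le hle (fun x hx =>
            hXDab x ⟨hu0ab.1.trans hx.1, hx.2.trans hv.2⟩)
      have hBcst : ∀ v ∈ Set.Ioo a b, B v = B u0 := by
        intro v hv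
        have hv0 : 0 ≤ v := hpos0 v (habst hv)
        rcases le_total v u0 with hle | hle
        · exact (hBconst v u0 hv0 hle (fun x hx =>
            hYDab x ⟨hv.1.trans hx.1, hx.2.trans hu0ab.2⟩)).symm
        · exact hBconst u0 v hu0'.le hle (fun x hx =>
            hYDab x ⟨hu0ab.1.trans hx.1, hx.2.trans hv.2⟩)
      have hAB : A u0 = B u0 := hABeq u0 hu0'.le hXY
      refine ⟨a, b, hu0ab, habst, fun v hv => ?_⟩
      have hv0 : 0 ≤ v := hpos0 v (habst hv)
      by_cases hltv : (X v).1 < (Y v).1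
      · rw [hGX v hv0 hltv, hGY u0 hu0'.le hnotlt, hAcst v hv, hAB]
      · rw [hGY v hv0 hltv, hGY u0 hu0'.le hnotlt, hBcst v hv]
    · -- V = Y near u0
      have hc : ContinuousAt (fun v => (X v).1 - (Y v).1) u0 := hXa.fst.sub hYa.fst
      have hmem : (fun v => (X v).1 - (Y v).1) ⁻¹' Set.Ioi 0 ∈ 𝓝 u0 :=
        hc (isOpen_Ioi.mem_nhds (sub_pos.mpr hcase))
      obtain ⟨a, b, hu0ab, hab⟩ := mem_nhds_iff_exists_Ioo_subset.mp
        (Filter.inter_mem hmem hnhds)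
      have habst : Set.Ioo a b ⊆ Set.Ioo s t := fun x hx => (hab hx).2
      have hYDab : ∀ x ∈ Set.Ioo a b, f (Y x).1 < (Y x).2 := by
        intro x hx
        have h1 := hVD x (hab hx).2
        rw [hV x, if_neg (not_lt.mpr (sub_pos.mp (hab hx).1).le)] at h1
        exact h1
      have hBcst : ∀ v ∈ Set.Ioo a b, B v = B u0 := by
        intro v hv
        have hv0 : 0 ≤ v := hpos0 v (habst hv)
        rcases le_total v u0 with hle | hle
        · exact (hBconst v u0 hv0 hle (fun x hx =>
            hYDab x ⟨hv.1.trans hx.1, hx.2.trans hu0ab.2⟩)).symm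
        · exact hBconst u0 v hu0'.le hle (fun x hx =>
            hYDab x ⟨hu0ab.1.trans hx.1, hx.2.trans hv.2⟩)
      refine ⟨a, b, hu0ab, habst, fun v hv => ?_⟩
      rw [hGY v (hpos0 v (habst hv)) (not_lt.mpr (sub_pos.mp (hab hv).1).le),
        hGY u0 hu0'.le (not_lt.mpr hcase.le), hBcst v hv]
  -- constancy on (s,t) by connectedness
  have hconst : ∀ u ∈ Set.Ioo s t, ∀ v ∈ Set.Ioo s t, V v - w v = V u - w u := by
    intro u hu v hv'
    by_contra hne
    set U : Set ℝ := {x | x ∈ Set.Ioo s t ∧ V x - w x = V u - w u} with hUdef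
    set W : Set ℝ := {x | x ∈ Set.Ioo s t ∧ V x - w x ≠ V u - w u} with hWdef
    have hUopen : IsOpen U := by
      rw [isOpen_iff_mem_nhds]
      intro x hx
      obtain ⟨a, b, hxab, hsub, hcst⟩ := hloc x hx.1
      exact Filter.mem_of_superset (isOpen_Ioo.mem_nhds hxab)
        (fun y hy => ⟨hsub hy, (hcst y hy).trans hx.2⟩)
    have hWopen : IsOpen W := by
      rw [isOpen_iff_mem_nhds]
      intro x hx
      obtain ⟨a, b, hxab, hsub, hcst⟩ := hloc x hx.1
      exact Filter.mem_of_superset (isOpen_Ioo.mem_nhds hxab)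
        (fun y hy => ⟨hsub hy, fun hcontra => hx.2 (((hcst y hy).symm).trans hcontra)⟩)
    have := isPreconnected_Ioo (a := s) (b := t) U W hUopen hWopen
      (fun x hx => by
        by_cases h : V x - w x = V u - w u
        · exact Or.inl ⟨hx, h⟩
        · exact Or.inr ⟨hx, h⟩)
      ⟨u, hu, hu, rfl⟩ ⟨v, hv', hv', hne⟩
    obtain ⟨x, _, hxU, hxW⟩ := this
    exact hxW.2 hxU.2
  -- endpoints
  set m := (s + t) / 2 with hmdef
  have hm : m ∈ Set.Ioo s t := ⟨by simp only [hmdef]; linarith, by simp only [hmdef]; linarith⟩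
  have hsub : Set.Ioo s t ⊆ Set.Ici (0:ℝ) := fun x hx => hs.trans hx.1.le
  have hendpoint : ∀ r, 0 ≤ r → r ∈ closure (Set.Ioo s t) →
      V r - w r = V m - w m := by
    intro r hr0 hrcl
    have hXr : ContinuousWithinAt X (Set.Ioo s t) r := (hXc r hr0).mono hsub
    have hYr : ContinuousWithinAt Y (Set.Ioo s t) r := (hYc r hr0).mono hsub
    have hwr : ContinuousWithinAt w (Set.Ioo s t) r := (hwc r hr0).mono hsub
    have hcwa := skorokhod_cwa_V X Y w V (Set.Ioo s t) r hXr hYr hwr hV (h1 r hr0)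
    haveI hNB : (𝓝[Set.Ioo s t] r).NeBot := mem_closure_iff_nhdsWithin_neBot.mp hrcl
    have ht1 : Tendsto (fun u => V u - w u) (𝓝[Set.Ioo s t] r) (𝓝 (V r - w r)) := hcwa
    have hEE : (fun _ : ℝ => V m - w m) =ᶠ[𝓝[Set.Ioo s t] r] (fun u => V u - w u) := by
      filter_upwards [self_mem_nhdsWithin] with x hx
      exact (hconst m hm x hx).symm
    have ht2 : Tendsto (fun u => V u - w u) (𝓝[Set.Ioo s t] r) (𝓝 (V m - w m)) :=
      Filter.Tendsto.congr' hEE tendsto_const_nhds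
    exact tendsto_nhds_unique ht1 ht2
  have hclo : closure (Set.Ioo s t) = Set.Icc s t := closure_Ioo hlt.ne
  have hts : V t - w t = V m - w m := hendpoint t (hs.trans hst)
    (by rw [hclo]; exact ⟨hst, le_refl t⟩)
  have hss : V s - w s = V m - w m := hendpoint s hs
    (by rw [hclo]; exact ⟨le_refl s, hst⟩)
  rw [hts, hss]
end

section
/- Assume the deterministic Skorokhod setup: f : ℝ → ℝ is 1-Lipschitz, D = {(x₁,x₂) ∈ ℝ² : x₂ > f(x₁)}, K = {(x₁,x₂) ∈ ℝ² : x₂ > |x₁|} with closure K̄ = {x₂ ≥ |x₁|}; X, Y : [0,∞) → ℝ² are continuous, take values in the closure D̄ = {x₂ ≥ f(x₁)}, and satisfy X₀ = Y₀; moreover X_t = X₀ + w_t + A_t and Y_t = Y₀ + w_t + B_t for all t ≥ 0, where w, A, B : [0,∞) → ℝ² are continuous with w₀ = A₀ = B₀ = 0, A_t − A_s ∈ K̄ and B_t − B_s ∈ K̄ whenever 0 ≤ s ≤ t, A is constant on every interval on which X remains in D, and B is constant on every interval on which Y remains in D. Define V : [0,∞) → ℝ² by V_t = X_t if X¹_t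 < Y¹_t and V_t = Y_t otherwise, and set C_t = V_t − V₀ − w_t. Then C has increments in the closed cone: C_t − C_s ∈ K̄ for all 0 ≤ s ≤ t. -/
/-- Key invariant: the difference `X - Y` can never lie strictly inside the
upward cone, i.e. `X² - Y² ≤ |X¹ - Y¹|` at all nonnegative times. -/
lemma aux_vert (f : ℝ → ℝ) (hf : LipschitzWith 1 f) (X Y A B : ℝ → ℝ × ℝ)
    (hAc : ContinuousOn A (Set.Ici 0)) (hBc : ContinuousOn B (Set.Ici 0))
    (hYD : ∀ t, 0 ≤ t → f (Y t).1 ≤ (Y t).2)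
    (hA0 : A 0 = 0) (hB0 : B 0 = 0)
    (hBincr : ∀ s t, 0 ≤ s → s ≤ t → |(B t - B s).1| ≤ (B t - B s).2)
    (hAconst : ∀ s t, 0 ≤ s → s ≤ t →
      (∀ u, u ∈ Set.Ioo s t → f (X u).1 < (X u).2) → A t = A s)
    (hXY : ∀ t, 0 ≤ t → X t - Y t = A t - B t)
    (u : ℝ) (hu : 0 ≤ u) :
    (X u).2 - (Y u).2 ≤ |(X u).1 - (Y u).1| := by
  by_contra hcon
  push_neg at hcon
  have hbr1 : ∀ r, 0 ≤ r → (X r).1 - (Y r).1 = (A r).1 - (B r).1 := by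
    intro r hr
    have := congrArg Prod.fst (hXY r hr)
    simpa using this
  have hbr2 : ∀ r, 0 ≤ r → (X r).2 - (Y r).2 = (A r).2 - (B r).2 := by
    intro r hr
    have := congrArg Prod.snd (hXY r hr)
    simpa using this
  -- rotated coordinates
  set p : ℝ → ℝ := fun r => ((A r).2 - (B r).2) + ((A r).1 - (B r).1) with hpdef
  set q : ℝ → ℝ := fun r => ((A r).2 - (B r).2) - ((A r).1 - (B r).1) with hqdef
  have e1 := hbr1 u hu
  have e2 := hbr2 u hu
  obtain ⟨habl, habr⟩ := abs_lt.mp hcon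
  have hpu : 0 < p u := by simp only [hpdef]; linarith
  have hqu : 0 < q u := by simp only [hqdef]; linarith
  -- the set of earlier times where we are not strictly inside the cone
  set S : Set ℝ := {r | r ∈ Set.Icc 0 u ∧ (p r ≤ 0 ∨ q r ≤ 0)} with hSdef
  have hScont : ∀ g : ℝ → ℝ, ContinuousOn g (Set.Icc 0 u) →
      IsClosed {r | r ∈ Set.Icc 0 u ∧ g r ≤ 0} := by
    intro g hg
    have : {r | r ∈ Set.Icc 0 u ∧ g r ≤ 0} = Set.Icc 0 u ∩ g ⁻¹' Set.Iic 0 := by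
      ext r; simp [Set.mem_Icc, and_comm]
    rw [this]
    exact hg.preimage_isClosed_of_isClosed isClosed_Icc isClosed_Iic
  have hsub : Set.Icc (0:ℝ) u ⊆ Set.Ici 0 := fun x hx => hx.1
  have hAcc : ContinuousOn A (Set.Icc 0 u) := hAc.mono hsub
  have hBcc : ContinuousOn B (Set.Icc 0 u) := hBc.mono hsub
  have hpc : ContinuousOn p (Set.Icc 0 u) :=
    (hAcc.snd.sub hBcc.snd).add (hAcc.fst.sub hBcc.fst)
  have hqc : ContinuousOn q (Set.Icc 0 u) :=
    (hAcc.snd.sub hBcc.snd).sub (hAcc.fst.sub hBcc.fst)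
  have hSclosed : IsClosed S := by
    have : S = {r | r ∈ Set.Icc 0 u ∧ p r ≤ 0} ∪ {r | r ∈ Set.Icc 0 u ∧ q r ≤ 0} := by
      ext r; simp only [hSdef, Set.mem_setOf_eq, Set.mem_union]; tauto
    rw [this]
    exact (hScont p hpc).union (hScont q hqc)
  have h0S : (0:ℝ) ∈ S := by
    refine ⟨⟨le_refl 0, hu⟩, Or.inl ?_⟩
    simp [hpdef, hA0, hB0]
  have hbdd : BddAbove S := ⟨u, fun x hx => hx.1.2⟩
  set τ := sSup S with hτdef
  have hτS : τ ∈ S := hSclosed.csSup_mem ⟨0, h0S⟩ hbdd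
  have hτ0 : 0 ≤ τ := hτS.1.1
  have hτu : τ ≤ u := hτS.1.2
  have hτlt : τ < u := by
    rcases lt_or_eq_of_le hτu with h | h
    · exact h
    · exfalso
      rcases hτS.2 with hle | hle <;> rw [h] at hle <;> linarith
  -- on (τ, u) the path X stays strictly inside D
  have hint : ∀ r, r ∈ Set.Ioo τ u → f (X r).1 < (X r).2 := by
    intro r hr
    have hr0 : 0 ≤ r := le_trans hτ0 (le_of_lt hr.1)
    have hrIcc : r ∈ Set.Icc 0 u := ⟨hr0, le_of_lt hr.2⟩
    have hrS : r ∉ S := by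
      intro hmem
      exact absurd (le_csSup hbdd hmem) (not_le.mpr hr.1)
    have hpr : 0 < p r ∧ 0 < q r := by
      by_contra hc
      push_neg at hc
      apply hrS
      refine ⟨hrIcc, ?_⟩
      rcases le_or_gt (p r) 0 with h | h
      · exact Or.inl h
      · exact Or.inr (hc h)
    have hg1 := hbr1 r hr0
    have hg2 := hbr2 r hr0
    have habs : |(X r).1 - (Y r).1| < (A r).2 - (B r).2 := by
      rw [hg1]
      rw [abs_lt]
      constructor
      · have := hpr.1; simp only [hpdef] at this; linarith
      · have := hpr.2; simp only [hqdef] at this; linarith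
    have hlip : f (X r).1 - f (Y r).1 ≤ |(X r).1 - (Y r).1| := by
      calc f (X r).1 - f (Y r).1 ≤ |f (X r).1 - f (Y r).1| := le_abs_self _
        _ ≤ |(X r).1 - (Y r).1| := by
            have := hf.dist_le_mul (X r).1 (Y r).1
            rw [Real.dist_eq, Real.dist_eq] at this
            simpa using this
    have hY := hYD r hr0
    linarith
  have hAeq : A u = A τ := hAconst τ u hτ0 (le_of_lt hτlt) hint
  have hA1 : (A u).1 = (A τ).1 := congrArg Prod.fst hAeq
  have hA2 : (A u).2 = (A τ).2 := congrArg Prod.snd hAeq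
  have hB := hBincr τ u hτ0 (le_of_lt hτlt)
  rw [Prod.fst_sub, Prod.snd_sub] at hB
  obtain ⟨hB1, hB2⟩ := abs_le.mp hB
  simp only [hpdef, hqdef] at hpu hqu
  rcases hτS.2 with h | h
  · simp only [hpdef] at h; linarith
  · simp only [hqdef] at h; linarith

/-- Deterministic Skorokhod setup: the "local time" part C of the coupled
process V has increments in the closed cone K̄ = {(x₁,x₂) : x₂ ≥ |x₁|}. -/
theorem coupled_local_time_increments_mem_closed_cone
    (f : ℝ → ℝ) (hf : LipschitzWith 1 f)
    (X Y w A B : ℝ → ℝ × ℝ)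
    (hXc : ContinuousOn X (Set.Ici 0)) (hYc : ContinuousOn Y (Set.Ici 0))
    (hwc : ContinuousOn w (Set.Ici 0))
    (hAc : ContinuousOn A (Set.Ici 0)) (hBc : ContinuousOn B (Set.Ici 0))
    (hXD : ∀ t, 0 ≤ t → f (X t).1 ≤ (X t).2)
    (hYD : ∀ t, 0 ≤ t → f (Y t).1 ≤ (Y t).2)
    (h0 : X 0 = Y 0)
    (hXeq : ∀ t, 0 ≤ t → X t = X 0 + w t + A t)
    (hYeq : ∀ t, 0 ≤ t → Y t = Y 0 + w t + B t)
    (hw0 : w 0 = 0) (hA0 : A 0 = 0) (hB0 : B 0 = 0)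
    (hAincr : ∀ s t, 0 ≤ s → s ≤ t → |(A t - A s).1| ≤ (A t - A s).2)
    (hBincr : ∀ s t, 0 ≤ s → s ≤ t → |(B t - B s).1| ≤ (B t - B s).2)
    (hAconst : ∀ s t, 0 ≤ s → s ≤ t →
      (∀ u, u ∈ Set.Ioo s t → f (X u).1 < (X u).2) → A t = A s)
    (hBconst : ∀ s t, 0 ≤ s → s ≤ t →
      (∀ u, u ∈ Set.Ioo s t → f (Y u).1 < (Y u).2) → B t = B s)
    (V C : ℝ → ℝ × ℝ)
    (hV : ∀ t, V t = if (X t).1 < (Y t).1 then X t else Y t)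
    (hC : ∀ t, C t = V t - V 0 - w t) :
    ∀ s t, 0 ≤ s → s ≤ t → |(C t - C s).1| ≤ (C t - C s).2 := by
  have hXY : ∀ r, 0 ≤ r → X r - Y r = A r - B r := by
    intro r hr
    rw [hXeq r hr, hYeq r hr, h0]
    abel
  have hYX : ∀ r, 0 ≤ r → Y r - X r = B r - A r := by
    intro r hr
    rw [hXeq r hr, hYeq r hr, h0]
    abel
  have hV0 : V 0 = Y 0 := by
    rw [hV 0]
    rw [if_neg]
    rw [h0]
    exact lt_irrefl _
  have hCr : ∀ r, 0 ≤ r → C r = if (X r).1 < (Y r).1 then A r else B r := by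
    intro r hr
    rw [hC r, hV r, hV0]
    split_ifs with h
    · rw [hXeq r hr, ← h0]; abel
    · rw [hYeq r hr]; abel
  -- coincidence at alignment times
  have halign : ∀ u, 0 ≤ u → (X u).1 = (Y u).1 → A u = B u := by
    intro u hu hgu
    have d1 := aux_vert f hf X Y A B hAc hBc hYD hA0 hB0 hBincr hAconst hXY u hu
    have d2 := aux_vert f hf Y X B A hBc hAc hXD hB0 hA0 hAincr hBconst hYX u hu
    have hz : (X u).1 - (Y u).1 = 0 := by rw [hgu]; ring
    have hz' : (Y u).1 - (X u).1 = 0 := by rw [hgu]; ring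
    rw [hz, abs_zero] at d1
    rw [hz', abs_zero] at d2
    have h2 : (X u).2 = (Y u).2 := le_antisymm (by linarith) (by linarith)
    have hXYu : X u - Y u = 0 := by
      apply Prod.ext <;> simp [hz, h2]
    have := hXY u hu
    rw [hXYu] at this
    exact (sub_eq_zero.mp this.symm)
  intro s t hs hst
  have ht0 : 0 ≤ t := hs.trans hst
  have hsub : Set.Icc s t ⊆ Set.Ici 0 := fun x hx => hs.trans hx.1
  have hgc : ContinuousOn (fun r => (X r).1 - (Y r).1) (Set.Icc s t) :=
    (hXc.mono hsub).fst.sub (hYc.mono hsub).fst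
  rw [hCr t ht0, hCr s hs]
  split_ifs with h1 h2
  · exact hAincr s t hs hst
  · -- C t = A t, C s = B s : mixed case, g s ≥ 0 > g t is impossible... use IVT
    have hgs : (0:ℝ) ≤ (X s).1 - (Y s).1 := by
      push_neg at h2; linarith
    have hgt : (X t).1 - (Y t).1 < 0 := by linarith
    have h0mem : (0:ℝ) ∈ Set.Icc ((X t).1 - (Y t).1) ((X s).1 - (Y s).1) :=
      ⟨le_of_lt hgt, hgs⟩
    obtain ⟨u, huIcc, hgu⟩ := intermediate_value_Icc' hst hgc h0mem
    have hu0 : 0 ≤ u := hs.trans huIcc.1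
    have hAB : A u = B u := halign u hu0 (by linarith [sub_eq_zero.mp hgu])
    have i1 := hAincr u t hu0 huIcc.2
    have i2 := hBincr s u hs huIcc.1
    rw [Prod.fst_sub, Prod.snd_sub] at i1 i2 ⊢
    obtain ⟨i1l, i1r⟩ := abs_le.mp i1
    obtain ⟨i2l, i2r⟩ := abs_le.mp i2
    have c1 : (A u).1 = (B u).1 := congrArg Prod.fst hAB
    have c2 : (A u).2 = (B u).2 := congrArg Prod.snd hAB
    rw [abs_le]
    constructor <;> linarith
  · -- C t = B t, C s = A s
    have hgs : (X s).1 - (Y s).1 < 0 := by linarith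
    have hgt : (0:ℝ) ≤ (X t).1 - (Y t).1 := by push_neg at h1; linarith
    have h0mem : (0:ℝ) ∈ Set.Icc ((X s).1 - (Y s).1) ((X t).1 - (Y t).1) :=
      ⟨le_of_lt hgs, hgt⟩
    obtain ⟨u, huIcc, hgu⟩ := intermediate_value_Icc hst hgc h0mem
    have hu0 : 0 ≤ u := hs.trans huIcc.1
    have hAB : A u = B u := halign u hu0 (by linarith [sub_eq_zero.mp hgu])
    have i1 := hBincr u t hu0 huIcc.2
    have i2 := hAincr s u hs huIcc.1
    rw [Prod.fst_sub, Prod.snd_sub] at i1 i2 ⊢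
    obtain ⟨i1l, i1r⟩ := abs_le.mp i1
    obtain ⟨i2l, i2r⟩ := abs_le.mp i2
    have c1 : (A u).1 = (B u).1 := congrArg Prod.fst hAB
    have c2 : (A u).2 = (B u).2 := congrArg Prod.snd hAB
    rw [abs_le]
    constructor <;> linarith
  · exact hBincr s t hs hst
end
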